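/- Refined estimate for the Lagrange multiplier (scalar core of the lemma giving |η^{n+1/2} − 1| ≤ (2A/γ)Δt²): Let g : ℝ → ℝ, let δ > 0, γ > 0 and A ≥ 0 satisfy (2A/γ)·δ² ≤ δ^{1/2}. Suppose g is differentiable at every point of the closed interval [1 − δ^{1/2}, 1 + δ^{1/2}] with g′(x) ≥ (γ/2)·δ for all x in this interval, and |g(1)| ≤ A·δ³. Then there exists a unique η ∈ [1 − δ^{1/2}, 1 + δ^{1/2}] with g(η) = 0, and this η satisfies |η − 1| ≤ (2A/γ)·δ². -/

import Mathlib

/-- Refined estimate for the Lagrange multiplier (scalar core of the lemma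
giving `|η^{n+1/2} − 1| ≤ (2A/γ)Δt²`). -/
theorem lagrange_multiplier_refined_estimate
    (g : ℝ → ℝ) (δ γ A : ℝ) (hδ : 0 < δ) (hγ : 0 < γ) (hA : 0 ≤ A)
    (hsmall : (2 * A / γ) * δ ^ 2 ≤ Real.sqrt δ)
    (hdiff : ∀ x ∈ Set.Icc (1 - Real.sqrt δ) (1 + Real.sqrt δ),
      DifferentiableAt ℝ g x)
    (hderiv : ∀ x ∈ Set.Icc (1 - Real.sqrt δ) (1 + Real.sqrt δ),
      (γ / 2) * δ ≤ deriv g x)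
    (hg1 : |g 1| ≤ A * δ ^ 3) :
    ∃ η : ℝ, (η ∈ Set.Icc (1 - Real.sqrt δ) (1 + Real.sqrt δ) ∧ g η = 0 ∧
        |η - 1| ≤ (2 * A / γ) * δ ^ 2) ∧
      ∀ η' : ℝ, η' ∈ Set.Icc (1 - Real.sqrt δ) (1 + Real.sqrt δ) → g η' = 0 →
        η' = η := by
  set s := Real.sqrt δ with hs
  set r := (2 * A / γ) * δ ^ 2 with hrdef
  set c := (γ / 2) * δ with hcdef
  have hc : 0 < c := by positivity
  have hr0 : 0 ≤ r := by positivity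
  have hs0 : 0 ≤ s := Real.sqrt_nonneg δ
  have hcr : c * r = A * δ ^ 3 := by
    rw [hcdef, hrdef]
    field_simp
  set I := Set.Icc (1 - s) (1 + s) with hI
  have hconv : Convex ℝ I := convex_Icc _ _
  have hcont : ContinuousOn g I := fun x hx => (hdiff x hx).continuousAt.continuousWithinAt
  have hdiff' : DifferentiableOn ℝ g (interior I) := fun x hx =>
    (hdiff x (interior_subset hx)).differentiableWithinAt
  have hderiv' : ∀ x ∈ interior I, c ≤ deriv g x := fun x hx =>
    hderiv x (interior_subset hx)
  have hmem : ∀ t : ℝ, |t - 1| ≤ r → t ∈ I := by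
    intro t ht
    rw [abs_sub_le_iff] at ht
    constructor
    · linarith [hsmall, ht.2]
    · linarith [hsmall, ht.1]
  have h1p : (1 + r) ∈ I := hmem _ (by simp [abs_of_nonneg hr0])
  have h1m : (1 - r) ∈ I := hmem _ (by rw [abs_sub_comm]; simp [abs_of_nonneg hr0])
  have habs := abs_le.mp hg1
  -- mean value bounds
  have hub : c * ((1 + r) - 1) ≤ g (1 + r) - g 1 :=
    hconv.mul_sub_le_image_sub_of_le_deriv hcont hdiff' hderiv'
      1 (hmem 1 (by simp [hr0])) (1 + r) h1p (by linarith)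
  have hlb : c * (1 - (1 - r)) ≤ g 1 - g (1 - r) :=
    hconv.mul_sub_le_image_sub_of_le_deriv hcont hdiff' hderiv'
      (1 - r) h1m 1 (hmem 1 (by simp [hr0])) (by linarith)
  have hgp : 0 ≤ g (1 + r) := by nlinarith
  have hgm : g (1 - r) ≤ 0 := by nlinarith
  have hsub : Set.Icc (1 - r) (1 + r) ⊆ I := Set.Icc_subset_Icc (by linarith) (by linarith)
  obtain ⟨η, hη, hgη⟩ := intermediate_value_Icc (by linarith : (1:ℝ) - r ≤ 1 + r)
    (hcont.mono hsub) (Set.mem_Icc.mpr ⟨hgm, hgp⟩)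
  have hηI : η ∈ I := hsub hη
  have hmono : StrictMonoOn g I :=
    strictMonoOn_of_deriv_pos hconv hcont (fun x hx => lt_of_lt_of_le hc (hderiv' x hx))
  refine ⟨η, ⟨hηI, hgη, abs_sub_le_iff.mpr ⟨by linarith [hη.2], by linarith [hη.1]⟩⟩, ?_⟩
  intro η' hη'I hgη'
  exact hmono.injOn hη'I hηI (hgη'.trans hgη.symm)
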